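/- The partial derivative of v_i(l_i) = r(l_i)² (π − α_i(l_i) + ½ sin 2α_i(l_i)) with respect to l_i equals 2(l_i + y cos θ)(π − α_i(l_i)) + 2 y sin θ for the case i = 2 (and analogously 2(l₁ − y cos θ)(π − α₁(l₁)) + 2 y sin θ for i = 1), where r(l₁) = √(l₁² + y² − 2 l₁ y cos θ), cos α₁(l₁) = (l₁ − y cos θ)/r(l₁), r(l₂) = √(l₂² + y² + 2 l₂ y cos θ), cos α₂(l₂) = (l₂ + y cos θ)/r(l₂). -/

import Mathlib

open Real

lemma key (a b : ℝ) (hb : 0 < b) (l : ℝ) :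
    HasDerivAt (fun x : ℝ =>
        Real.sqrt ((x + a) ^ 2 + b ^ 2) ^ 2 *
          (π - Real.arccos ((x + a) / Real.sqrt ((x + a) ^ 2 + b ^ 2))
            + 1 / 2 * Real.sin (2 * Real.arccos ((x + a) / Real.sqrt ((x + a) ^ 2 + b ^ 2)))))
      (2 * (l + a) * (π - Real.arccos ((l + a) / Real.sqrt ((l + a) ^ 2 + b ^ 2))) + 2 * b) l := by
  have hqpos : ∀ x : ℝ, 0 < (x + a) ^ 2 + b ^ 2 := fun x => by positivity
  have hq : 0 < (l + a) ^ 2 + b ^ 2 := hqpos l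
  have hs : 0 < Real.sqrt ((l + a) ^ 2 + b ^ 2) := Real.sqrt_pos.mpr hq
  have hsq : Real.sqrt ((l + a) ^ 2 + b ^ 2) ^ 2 = (l + a) ^ 2 + b ^ 2 := Real.sq_sqrt hq.le
  have h1 : HasDerivAt (fun x : ℝ => x + a) 1 l := (hasDerivAt_id l).add_const a
  have h2 : HasDerivAt (fun x : ℝ => (x + a) ^ 2 + b ^ 2) (2 * (l + a)) l := by
    have := (h1.pow 2).add_const (b ^ 2)
    refine this.congr_deriv ?_
    push_cast
    ring
  have h3 : HasDerivAt (fun x : ℝ => Real.sqrt ((x + a) ^ 2 + b ^ 2))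
      ((l + a) / Real.sqrt ((l + a) ^ 2 + b ^ 2)) l := by
    have := (Real.hasDerivAt_sqrt hq.ne').comp l h2
    refine this.congr_deriv ?_
    field_simp
  have h4 : HasDerivAt (fun x : ℝ => (x + a) / Real.sqrt ((x + a) ^ 2 + b ^ 2))
      (b ^ 2 / (((l + a) ^ 2 + b ^ 2) * Real.sqrt ((l + a) ^ 2 + b ^ 2))) l := by
    have := h1.div h3 hs.ne'
    refine this.congr_deriv ?_
    rw [div_eq_div_iff (by positivity) (by positivity)]
    field_simp
    nlinarith [hsq, hs, sq_nonneg (l+a)]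
  have habs : |l + a| < Real.sqrt ((l + a) ^ 2 + b ^ 2) := by
    rw [← Real.sqrt_sq_eq_abs]
    exact Real.sqrt_lt_sqrt (sq_nonneg _) (by nlinarith)
  have hult : |(l + a) / Real.sqrt ((l + a) ^ 2 + b ^ 2)| < 1 := by
    rw [abs_div, abs_of_pos hs, div_lt_one hs]
    exact habs
  obtain ⟨hul, hur⟩ := abs_lt.mp hult
  have h1u : Real.sqrt (1 - ((l + a) / Real.sqrt ((l + a) ^ 2 + b ^ 2)) ^ 2)
      = b / Real.sqrt ((l + a) ^ 2 + b ^ 2) := by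
    have : 1 - ((l + a) / Real.sqrt ((l + a) ^ 2 + b ^ 2)) ^ 2 = b ^ 2 / ((l + a) ^ 2 + b ^ 2) := by
      rw [div_pow, hsq]
      field_simp
      ring
    rw [this, Real.sqrt_div (sq_nonneg b), Real.sqrt_sq hb.le]
  have h6 : HasDerivAt (fun x : ℝ => Real.arccos ((x + a) / Real.sqrt ((x + a) ^ 2 + b ^ 2)))
      (-(b / ((l + a) ^ 2 + b ^ 2))) l := by
    have := (Real.hasDerivAt_arccos hul.ne' hur.ne).comp l h4
    refine this.congr_deriv ?_
    rw [h1u]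
    field_simp
  have h7 : HasDerivAt (fun x : ℝ =>
      ((x + a) ^ 2 + b ^ 2) *
        (π - Real.arccos ((x + a) / Real.sqrt ((x + a) ^ 2 + b ^ 2))) + (x + a) * b)
      (2 * (l + a) * (π - Real.arccos ((l + a) / Real.sqrt ((l + a) ^ 2 + b ^ 2))) + 2 * b) l := by
    have := (h2.mul ((hasDerivAt_const l π).sub h6)).add (h1.mul_const b)
    refine this.congr_deriv ?_
    simp only [Pi.sub_apply]
    field_simp
    ring
  refine h7.congr_of_eventuallyEq (Filter.Eventually.of_forall fun x => ?_)
  have hqx : 0 < (x + a) ^ 2 + b ^ 2 := hqpos x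
  have hsx : 0 < Real.sqrt ((x + a) ^ 2 + b ^ 2) := Real.sqrt_pos.mpr hqx
  have hsqx : Real.sqrt ((x + a) ^ 2 + b ^ 2) ^ 2 = (x + a) ^ 2 + b ^ 2 := Real.sq_sqrt hqx.le
  have habsx : |x + a| ≤ Real.sqrt ((x + a) ^ 2 + b ^ 2) := by
    rw [← Real.sqrt_sq_eq_abs]
    exact Real.sqrt_le_sqrt (by nlinarith)
  obtain ⟨hxl, hxr⟩ := abs_le.mp habsx
  have hux1 : -1 ≤ (x + a) / Real.sqrt ((x + a) ^ 2 + b ^ 2) := by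
    rw [le_div_iff₀ hsx]; linarith
  have hux2 : (x + a) / Real.sqrt ((x + a) ^ 2 + b ^ 2) ≤ 1 := (div_le_one hsx).mpr hxr
  have h1ux : Real.sqrt (1 - ((x + a) / Real.sqrt ((x + a) ^ 2 + b ^ 2)) ^ 2)
      = b / Real.sqrt ((x + a) ^ 2 + b ^ 2) := by
    have : 1 - ((x + a) / Real.sqrt ((x + a) ^ 2 + b ^ 2)) ^ 2 = b ^ 2 / ((x + a) ^ 2 + b ^ 2) := by
      rw [div_pow, hsqx]
      field_simp
      ring
    rw [this, Real.sqrt_div (sq_nonneg b), Real.sqrt_sq hb.le]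
  dsimp only
  rw [Real.sin_two_mul, Real.sin_arccos, Real.cos_arccos hux1 hux2, h1ux, hsqx]
  have hmul : Real.sqrt ((x + a) ^ 2 + b ^ 2) * Real.sqrt ((x + a) ^ 2 + b ^ 2)
      = (x + a) ^ 2 + b ^ 2 := Real.mul_self_sqrt hqx.le
  field_simp
  rw [hsqx]

lemma key_sub (a b : ℝ) (hb : 0 < b) (l : ℝ) :
    HasDerivAt (fun x : ℝ =>
        Real.sqrt ((x - a) ^ 2 + b ^ 2) ^ 2 *
          (π - Real.arccos ((x - a) / Real.sqrt ((x - a) ^ 2 + b ^ 2))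
            + 1 / 2 * Real.sin (2 * Real.arccos ((x - a) / Real.sqrt ((x - a) ^ 2 + b ^ 2)))))
      (2 * (l - a) * (π - Real.arccos ((l - a) / Real.sqrt ((l - a) ^ 2 + b ^ 2))) + 2 * b) l := by
  simpa only [← sub_eq_add_neg] using key (-a) b hb l


/-- With `r(l₁) = √(l₁²+y²-2l₁y cos θ)`,
`α₁(l₁) = arccos((l₁ - y cos θ)/r(l₁))`, `r(l₂) = √(l₂²+y²+2l₂y cos θ)`,
`α₂(l₂) = arccos((l₂ + y cos θ)/r(l₂))`, and
`v_i(l) = r(l)² (π - α_i(l) + ½ sin 2α_i(l))`, one has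
`v₂'(l₂) = 2(l₂ + y cos θ)(π - α₂(l₂)) + 2 y sin θ` and
`v₁'(l₁) = 2(l₁ - y cos θ)(π - α₁(l₁)) + 2 y sin θ`. -/
theorem stmt13 (y θ : ℝ) (hy : 0 < y) (hθ : θ ∈ Set.Ioo (0:ℝ) π) :
    (∀ l : ℝ, 0 < l →
      HasDerivAt (fun l : ℝ =>
          Real.sqrt (l ^ 2 + y ^ 2 + 2 * l * y * Real.cos θ) ^ 2 *
            (π - Real.arccos ((l + y * Real.cos θ) /
                Real.sqrt (l ^ 2 + y ^ 2 + 2 * l * y * Real.cos θ))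
              + 1 / 2 * Real.sin (2 * Real.arccos ((l + y * Real.cos θ) /
                  Real.sqrt (l ^ 2 + y ^ 2 + 2 * l * y * Real.cos θ)))))
        (2 * (l + y * Real.cos θ) *
            (π - Real.arccos ((l + y * Real.cos θ) /
              Real.sqrt (l ^ 2 + y ^ 2 + 2 * l * y * Real.cos θ)))
          + 2 * y * Real.sin θ) l) ∧
    (∀ l : ℝ, 0 < l →
      HasDerivAt (fun l : ℝ =>
          Real.sqrt (l ^ 2 + y ^ 2 - 2 * l * y * Real.cos θ) ^ 2 *
            (π - Real.arccos ((l - y * Real.cos θ) /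
                Real.sqrt (l ^ 2 + y ^ 2 - 2 * l * y * Real.cos θ))
              + 1 / 2 * Real.sin (2 * Real.arccos ((l - y * Real.cos θ) /
                  Real.sqrt (l ^ 2 + y ^ 2 - 2 * l * y * Real.cos θ)))))
        (2 * (l - y * Real.cos θ) *
            (π - Real.arccos ((l - y * Real.cos θ) /
              Real.sqrt (l ^ 2 + y ^ 2 - 2 * l * y * Real.cos θ)))
          + 2 * y * Real.sin θ) l) := by
  obtain ⟨hθ0, hθπ⟩ := hθ
  have hb : 0 < y * Real.sin θ := mul_pos hy (Real.sin_pos_of_pos_of_lt_pi hθ0 hθπ)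
  have hrw1 : ∀ x : ℝ, x ^ 2 + y ^ 2 + 2 * x * y * Real.cos θ
      = (x + y * Real.cos θ) ^ 2 + (y * Real.sin θ) ^ 2 := fun x => by
    nlinarith [Real.sin_sq_add_cos_sq θ]
  have hrw2 : ∀ x : ℝ, x ^ 2 + y ^ 2 - 2 * x * y * Real.cos θ
      = (x - y * Real.cos θ) ^ 2 + (y * Real.sin θ) ^ 2 := fun x => by
    nlinarith [Real.sin_sq_add_cos_sq θ]
  constructor
  · intro l _
    simp only [hrw1]
    have := key (y * Real.cos θ) (y * Real.sin θ) hb l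
    convert this using 1
    ring
  · intro l _
    simp only [hrw2]
    have := key_sub (y * Real.cos θ) (y * Real.sin θ) hb l
    convert this using 1
    ring
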